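/- Let J : ℝ → ℝ be integrable, nonnegative, even, not almost everywhere zero, with μ₂ = ∫ x²·J(x) dx < ∞. Then ψ(ξ) = sign(ξ)·√(2φ(ξ)/φ''(0)) is differentiable at every point of ℝ, ψ'(0) = 1, and |ψ'(ξ)| ≤ 1 for all ξ ∈ ℝ. -/

import Mathlib

open MeasureTheory Real FourierTransform Filter Metric

/-- The `k`-th moment `μ_k = ∫ x^k J(x) dx` of `J`. -/
noncomputable def momentJ (J : ℝ → ℝ) (k : ℕ) : ℝ := ∫ x : ℝ, x ^ k * J x

/-- `φ(ξ) = μ₀ − (𝓕J)(ξ)`; since `J` is real and even, `𝓕J` is real-valued,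
so we record `φ` through the real part of the Fourier transform. -/
noncomputable def phiJ (J : ℝ → ℝ) (ξ : ℝ) : ℝ :=
  momentJ J 0 - (𝓕 (fun x : ℝ => (J x : ℂ)) ξ).re

/-- The wave speed `c = √(μ₂/2)`. -/
noncomputable def speedJ (J : ℝ → ℝ) : ℝ := Real.sqrt (momentJ J 2 / 2)

/-- `ψ(ξ) = sign(ξ)·√(2 φ(ξ)/φ''(0))`, where `φ''(0) = 4π²μ₂`. -/
noncomputable def psiJ (J : ℝ → ℝ) (ξ : ℝ) : ℝ :=
  Real.sign ξ * Real.sqrt (2 * phiJ J ξ / (4 * Real.pi ^ 2 * momentJ J 2))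

/-- `s(t,ξ) = sin(2πcψ(ξ)t)/(2πcψ(ξ))`, interpreted as `t` when `ψ(ξ) = 0`. -/
noncomputable def skerJ (J : ℝ → ℝ) (t ξ : ℝ) : ℝ :=
  if psiJ J ξ = 0 then t
  else Real.sin (2 * Real.pi * speedJ J * psiJ J ξ * t) / (2 * Real.pi * speedJ J * psiJ J ξ)

/-- The Fourier representation of the solution of `u_tt + μ₀ u = J ⋆ u` with
initial data `u(0,·) = u₀`, `∂ₜu(0,·) = u₁`. -/
noncomputable def usolJ (J : ℝ → ℝ) (u₀ u₁ : SchwartzMap ℝ ℂ) (t x : ℝ) : ℂ :=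
  ∫ ξ : ℝ, Complex.exp (2 * Real.pi * Complex.I * ξ * x) *
    ((Real.cos (2 * Real.pi * speedJ J * psiJ J ξ * t) : ℂ) * 𝓕 (u₀ : ℝ → ℂ) ξ
      + (skerJ J t ξ : ℂ) * 𝓕 (u₁ : ℝ → ℂ) ξ)

/-- The Fourier representation of `D u`, where `D` is the Fourier multiplier
with symbol `2πi ψ(ξ)`. -/
noncomputable def DusolJ (J : ℝ → ℝ) (u₀ u₁ : SchwartzMap ℝ ℂ) (t x : ℝ) : ℂ :=
  ∫ ξ : ℝ, Complex.exp (2 * Real.pi * Complex.I * ξ * x) *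
    (2 * Real.pi * Complex.I * (psiJ J ξ : ℂ)) *
    ((Real.cos (2 * Real.pi * speedJ J * psiJ J ξ * t) : ℂ) * 𝓕 (u₀ : ℝ → ℂ) ξ
      + (skerJ J t ξ : ℂ) * 𝓕 (u₁ : ℝ → ℂ) ξ)


namespace PsiAux

variable {J : ℝ → ℝ}

/-- Real form of φ. -/
noncomputable def phiR (J : ℝ → ℝ) (ξ : ℝ) : ℝ :=
  ∫ x : ℝ, J x * (1 - Real.cos (2 * π * ξ * x))

/-- Candidate derivative of φ. -/
noncomputable def phiD (J : ℝ → ℝ) (ξ : ℝ) : ℝ :=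
  ∫ x : ℝ, J x * (2 * π * x * Real.sin (2 * π * ξ * x))

lemma int_cosJ (hJint : Integrable J) (ξ : ℝ) :
    Integrable (fun x : ℝ => Real.cos (2 * π * ξ * x) * J x) := by
  refine hJint.norm.mono' (((Real.continuous_cos.comp (by continuity)).aestronglyMeasurable).mul hJint.1) ?_
  filter_upwards with x
  rw [norm_mul]
  have : ‖Real.cos (2 * π * ξ * x)‖ ≤ 1 := abs_cos_le_one _
  calc ‖Real.cos (2 * π * ξ * x)‖ * ‖J x‖ ≤ 1 * ‖J x‖ := by
        exact mul_le_mul_of_nonneg_right this (norm_nonneg _)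
    _ = ‖J x‖ := one_mul _

lemma int_F (hJint : Integrable J) (ξ : ℝ) :
    Integrable (fun x : ℝ => J x * (1 - Real.cos (2 * π * ξ * x))) := by
  refine (hJint.norm.const_mul 2).mono' (hJint.1.mul ((by continuity : Continuous fun x : ℝ => 1 - Real.cos (2 * π * ξ * x)).aestronglyMeasurable)) ?_
  filter_upwards with x
  rw [norm_mul]
  have h1 : ‖1 - Real.cos (2 * π * ξ * x)‖ ≤ 2 := by
    rw [Real.norm_eq_abs, abs_le]
    constructor <;> nlinarith [Real.cos_le_one (2 * π * ξ * x), Real.neg_one_le_cos (2 * π * ξ * x)]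
  calc ‖J x‖ * ‖1 - Real.cos (2 * π * ξ * x)‖ ≤ ‖J x‖ * 2 :=
        mul_le_mul_of_nonneg_left h1 (norm_nonneg _)
    _ = 2 * ‖J x‖ := by ring

lemma phiJ_eq (hJint : Integrable J) : phiJ J = phiR J := by
  funext ξ
  have hmeas : AEStronglyMeasurable
      (fun v : ℝ => Complex.exp (↑(-2 * π * v * ξ) * Complex.I) • (J v : ℂ)) volume := by
    refine AEStronglyMeasurable.smul (f := fun v : ℝ => Complex.exp (↑(-2 * π * v * ξ) * Complex.I)) (g := fun v : ℝ => (J v : ℂ)) ?_ ?_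
    · exact (Complex.continuous_exp.comp (by continuity)).aestronglyMeasurable
    · exact Complex.continuous_ofReal.comp_aestronglyMeasurable hJint.1
  have hint : Integrable (fun v : ℝ => Complex.exp (↑(-2 * π * v * ξ) * Complex.I) • (J v : ℂ)) := by
    refine hJint.norm.mono' hmeas (Filter.Eventually.of_forall fun v => ?_)
    simp [Complex.norm_exp_ofReal_mul_I, Complex.norm_real, Complex.norm_exp]
  have hre : (𝓕 (fun x : ℝ => (J x : ℂ)) ξ).re = ∫ x : ℝ, Real.cos (2 * π * ξ * x) * J x := by
    rw [Real.fourier_real_eq_integral_exp_smul, ← RCLike.re_to_complex, ← integral_re hint]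
    congr 1; ext x
    rw [smul_eq_mul, RCLike.re_to_complex, Complex.mul_re, Complex.ofReal_re, Complex.ofReal_im,
      Complex.exp_ofReal_mul_I_re]
    rw [show (-2 : ℝ) * π * x * ξ = -(2 * π * ξ * x) by ring, Real.cos_neg]
    ring
  have hm0 : momentJ J 0 = ∫ x : ℝ, J x := by
    unfold momentJ; congr 1; funext x; rw [pow_zero, one_mul]
  unfold phiJ phiR
  rw [hre, hm0, ← integral_sub hJint (int_cosJ hJint ξ)]
  congr 1; funext x; ring

lemma phiR_nonneg (hJnonneg : ∀ x, 0 ≤ J x) (ξ : ℝ) : 0 ≤ phiR J ξ := by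
  refine integral_nonneg fun x => mul_nonneg (hJnonneg x) ?_
  nlinarith [Real.cos_le_one (2 * π * ξ * x)]

lemma phiR_zero : phiR J 0 = 0 := by
  unfold phiR
  simp

lemma phiR_pos (hJint : Integrable J) (hJnonneg : ∀ x, 0 ≤ J x)
    (hJne : ¬ (∀ᵐ x : ℝ ∂volume, J x = 0)) {ξ : ℝ} (hξ : ξ ≠ 0) : 0 < phiR J ξ := by
  rcases lt_or_eq_of_le (phiR_nonneg hJnonneg ξ) with h | h
  · exact h
  exfalso
  have h0 : ∫ x : ℝ, J x * (1 - Real.cos (2 * π * ξ * x)) = 0 := h.symm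
  have hae : (fun x : ℝ => J x * (1 - Real.cos (2 * π * ξ * x))) =ᵐ[volume] 0 := by
    rw [← integral_eq_zero_iff_of_nonneg_ae ?_ (int_F hJint ξ)]
    · exact h0
    · filter_upwards with x
      exact mul_nonneg (hJnonneg x) (by nlinarith [Real.cos_le_one (2 * π * ξ * x)])
  -- the set of x with cos(2πξx) = 1 is countable, hence null
  have hS : volume (Set.range fun n : ℤ => (n : ℝ) / ξ) = 0 :=
    (Set.countable_range _).measure_zero _
  have hS' : ∀ᵐ x : ℝ ∂volume, x ∉ Set.range fun n : ℤ => (n : ℝ) / ξ :=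
    (ae_iff.2 (by convert hS using 2; ext a; simp))
  apply hJne
  filter_upwards [hae, hS'] with x hx hxS
  by_contra hJx
  have hcos : Real.cos (2 * π * ξ * x) = 1 := by
    have : 1 - Real.cos (2 * π * ξ * x) = 0 := by
      rcases mul_eq_zero.1 hx with h' | h'
      · exact absurd h' hJx
      · exact h'
    linarith
  rcases (Real.cos_eq_one_iff _).1 hcos with ⟨n, hn⟩
  exact hxS ⟨n, by field_simp; nlinarith [Real.pi_pos, hn]⟩

end PsiAux

namespace PsiAux

lemma mu2_pos (hJnonneg : ∀ x, 0 ≤ J x)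
    (hJne : ¬ (∀ᵐ x : ℝ ∂volume, J x = 0))
    (hmom2 : Integrable (fun x : ℝ => x ^ 2 * J x)) : 0 < momentJ J 2 := by
  have hnn : 0 ≤ momentJ J 2 :=
    integral_nonneg fun x => mul_nonneg (sq_nonneg x) (hJnonneg x)
  rcases lt_or_eq_of_le hnn with h | h
  · exact h
  exfalso
  have hae : (fun x : ℝ => x ^ 2 * J x) =ᵐ[volume] 0 := by
    rw [← integral_eq_zero_iff_of_nonneg (fun x => mul_nonneg (sq_nonneg x) (hJnonneg x)) hmom2]
    exact h.symm
  apply hJne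
  have h0 : ∀ᵐ x : ℝ ∂volume, x ≠ 0 := by
    refine ae_iff.2 ?_
    simpa using (volume_singleton (a := (0:ℝ)))
  filter_upwards [hae, h0] with x hx hx0
  have : x ^ 2 ≠ 0 := pow_ne_zero _ hx0
  have := mul_eq_zero.1 hx
  tauto

lemma int_absxJ (hJint : Integrable J) (hJnonneg : ∀ x, 0 ≤ J x)
    (hmom2 : Integrable (fun x : ℝ => x ^ 2 * J x)) :
    Integrable (fun x : ℝ => |x| * J x) := by
  refine (hJint.add hmom2).mono'
    ((continuous_abs.aestronglyMeasurable).mul hJint.1) ?_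
  filter_upwards with x
  have h1 : ‖|x| * J x‖ = |x| * J x := by
    rw [Real.norm_eq_abs, abs_of_nonneg (mul_nonneg (abs_nonneg x) (hJnonneg x))]
  rw [h1]
  have h2 : |x| ≤ 1 + x ^ 2 := by nlinarith [abs_nonneg x, sq_abs x]
  have : (J + fun x => x ^ 2 * J x) x = J x + x ^ 2 * J x := rfl
  rw [this]
  nlinarith [hJnonneg x]

lemma int_F' (hJint : Integrable J) (hJnonneg : ∀ x, 0 ≤ J x)
    (hmom2 : Integrable (fun x : ℝ => x ^ 2 * J x)) (ξ : ℝ) :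
    Integrable (fun x : ℝ => J x * (2 * π * x * Real.sin (2 * π * ξ * x))) := by
  refine ((int_absxJ hJint hJnonneg hmom2).const_mul (2 * π)).mono'
    (hJint.1.mul (by continuity : Continuous fun x : ℝ =>
      2 * π * x * Real.sin (2 * π * ξ * x)).aestronglyMeasurable) ?_
  filter_upwards with x
  rw [norm_mul, Real.norm_eq_abs, Real.norm_eq_abs, abs_mul, abs_mul]
  have hs : |Real.sin (2 * π * ξ * x)| ≤ 1 := abs_sin_le_one _
  have hπ : |2 * π| = 2 * π := abs_of_pos (by positivity)
  rw [hπ]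
  calc |J x| * (2 * π * |x| * |Real.sin (2 * π * ξ * x)|)
      ≤ |J x| * (2 * π * |x| * 1) := by
        refine mul_le_mul_of_nonneg_left ?_ (abs_nonneg _)
        exact mul_le_mul_of_nonneg_left hs (by positivity)
    _ = 2 * π * (|x| * |J x|) := by ring
    _ = 2 * π * (|x| * J x) := by rw [abs_of_nonneg (hJnonneg x)]

lemma hasDerivAt_phiR (hJint : Integrable J) (hJnonneg : ∀ x, 0 ≤ J x)
    (hmom2 : Integrable (fun x : ℝ => x ^ 2 * J x)) (ξ : ℝ) :
    HasDerivAt (phiR J) (phiD J ξ) ξ := by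
  have := hasDerivAt_integral_of_dominated_loc_of_deriv_le (μ := volume) (x₀ := ξ)
    (F := fun ξ' x => J x * (1 - Real.cos (2 * π * ξ' * x)))
    (F' := fun ξ' x => J x * (2 * π * x * Real.sin (2 * π * ξ' * x)))
    (bound := fun x => 2 * π * (|x| * J x)) (Metric.ball_mem_nhds ξ one_pos)
    (Eventually.of_forall fun ξ' => (int_F hJint ξ').1)
    (int_F hJint ξ)
    (int_F' hJint hJnonneg hmom2 ξ).1
    ?_ ((int_absxJ hJint hJnonneg hmom2).const_mul (2 * π)) ?_
  · exact this.2
  · filter_upwards with x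
    intro ξ' _
    rw [norm_mul, Real.norm_eq_abs, Real.norm_eq_abs, abs_mul, abs_mul]
    have hs : |Real.sin (2 * π * ξ' * x)| ≤ 1 := abs_sin_le_one _
    have hπ : |2 * π| = 2 * π := abs_of_pos (by positivity)
    rw [hπ]
    calc |J x| * (2 * π * |x| * |Real.sin (2 * π * ξ' * x)|)
        ≤ |J x| * (2 * π * |x| * 1) := by
          refine mul_le_mul_of_nonneg_left ?_ (abs_nonneg _)
          exact mul_le_mul_of_nonneg_left hs (by positivity)
      _ = 2 * π * (|x| * |J x|) := by ring
      _ = 2 * π * (|x| * J x) := by rw [abs_of_nonneg (hJnonneg x)]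
  · filter_upwards with x
    intro ξ' _
    have h1 : HasDerivAt (fun ξ'' : ℝ => 2 * π * ξ'' * x) (2 * π * x) ξ' := by
      simpa using ((hasDerivAt_id ξ').const_mul (2 * π)).mul_const x
    have h2 : HasDerivAt (fun ξ'' : ℝ => Real.cos (2 * π * ξ'' * x))
        (-Real.sin (2 * π * ξ' * x) * (2 * π * x)) ξ' := h1.cos
    have h3 := (h2.const_sub 1).const_mul (J x)
    exact h3.congr_deriv (by ring)

end PsiAux

namespace PsiAux

lemma int_sinsqJ (hJint : Integrable J) (ξ : ℝ) :
    Integrable (fun x : ℝ => J x * Real.sin (2 * π * ξ * x) ^ 2) := by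
  refine hJint.norm.mono'
    (hJint.1.mul (by continuity : Continuous fun x : ℝ =>
      Real.sin (2 * π * ξ * x) ^ 2).aestronglyMeasurable) ?_
  filter_upwards with x
  rw [norm_mul, Real.norm_eq_abs, Real.norm_eq_abs]
  have hs : |Real.sin (2 * π * ξ * x) ^ 2| ≤ 1 := by
    rw [abs_of_nonneg (sq_nonneg _)]
    nlinarith [abs_sin_le_one (2 * π * ξ * x), abs_nonneg (Real.sin (2 * π * ξ * x)), sq_abs (Real.sin (2 * π * ξ * x))]
  nlinarith [abs_nonneg (J x)]

lemma sinsq_le (hJint : Integrable J) (hJnonneg : ∀ x, 0 ≤ J x) (ξ : ℝ) :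
    ∫ x : ℝ, J x * Real.sin (2 * π * ξ * x) ^ 2 ≤ 2 * phiR J ξ := by
  have h2 : 2 * phiR J ξ = ∫ x : ℝ, 2 * (J x * (1 - Real.cos (2 * π * ξ * x))) := by
    rw [integral_const_mul]; rfl
  rw [h2]
  refine integral_mono (int_sinsqJ hJint ξ) ((int_F hJint ξ).const_mul 2) fun x => ?_
  have := Real.sin_sq_add_cos_sq (2 * π * ξ * x)
  nlinarith [Real.cos_le_one (2 * π * ξ * x), Real.neg_one_le_cos (2 * π * ξ * x), hJnonneg x,
    mul_nonneg (hJnonneg x) (sq_nonneg (1 - Real.cos (2 * π * ξ * x)))]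

lemma phiD_sq_le (hJint : Integrable J) (hJnonneg : ∀ x, 0 ≤ J x)
    (hJne : ¬ (∀ᵐ x : ℝ ∂volume, J x = 0))
    (hmom2 : Integrable (fun x : ℝ => x ^ 2 * J x)) (ξ : ℝ) :
    (phiD J ξ) ^ 2 ≤ 8 * π ^ 2 * momentJ J 2 * phiR J ξ := by
  set A : ℝ := 4 * π ^ 2 * momentJ J 2 with hAdef
  have hμ := mu2_pos hJnonneg hJne hmom2
  have hA : 0 < A := by positivity
  set t : ℝ := phiD J ξ / A with htdef
  set c : ℝ := ∫ x : ℝ, J x * Real.sin (2 * π * ξ * x) ^ 2 with hcdef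
  have key : 0 ≤ ∫ x : ℝ, J x * (t * (2 * π * x) - Real.sin (2 * π * ξ * x)) ^ 2 :=
    integral_nonneg fun x => mul_nonneg (hJnonneg x) (sq_nonneg _)
  have i1 : Integrable (fun x : ℝ => t ^ 2 * (4 * π ^ 2) * (x ^ 2 * J x)) :=
    hmom2.const_mul _
  have i2 : Integrable (fun x : ℝ => 2 * t * (J x * (2 * π * x * Real.sin (2 * π * ξ * x)))) :=
    (int_F' hJint hJnonneg hmom2 ξ).const_mul _
  have i3 : Integrable (fun x : ℝ => J x * Real.sin (2 * π * ξ * x) ^ 2) :=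
    int_sinsqJ hJint ξ
  have expand : ∫ x : ℝ, J x * (t * (2 * π * x) - Real.sin (2 * π * ξ * x)) ^ 2
      = t ^ 2 * A - 2 * t * phiD J ξ + c := by
    have heq : (fun x : ℝ => J x * (t * (2 * π * x) - Real.sin (2 * π * ξ * x)) ^ 2)
        = fun x : ℝ => t ^ 2 * (4 * π ^ 2) * (x ^ 2 * J x)
          - 2 * t * (J x * (2 * π * x * Real.sin (2 * π * ξ * x)))
          + J x * Real.sin (2 * π * ξ * x) ^ 2 := by
      funext x; ring
    have i12 : Integrable (fun x : ℝ => t ^ 2 * (4 * π ^ 2) * (x ^ 2 * J x)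
        - 2 * t * (J x * (2 * π * x * Real.sin (2 * π * ξ * x)))) := i1.sub i2
    rw [heq]
    rw [integral_add i12 i3, integral_sub i1 i2, integral_const_mul, integral_const_mul]
    unfold A c
    unfold phiD momentJ
    ring
  have htA : t * A = phiD J ξ := div_mul_cancel₀ _ (ne_of_gt hA)
  have hkey2 : (phiD J ξ) ^ 2 ≤ A * c := by nlinarith [key, expand.symm ▸ key]
  have hc2 := sinsq_le hJint hJnonneg ξ
  have hphi := phiR_nonneg hJnonneg ξ
  calc (phiD J ξ) ^ 2 ≤ A * c := hkey2
    _ ≤ A * (2 * phiR J ξ) := by exact mul_le_mul_of_nonneg_left hc2 hA.le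
    _ = 8 * π ^ 2 * momentJ J 2 * phiR J ξ := by rw [hAdef]; ring

end PsiAux

namespace PsiAux

lemma tendsto_sin_div : Tendsto (fun t : ℝ => Real.sin t / t) (nhdsWithin 0 {(0:ℝ)}ᶜ) (nhds 1) := by
  have h := (Real.hasDerivAt_sin 0)
  rw [hasDerivAt_iff_tendsto_slope] at h
  have : slope Real.sin 0 = fun t : ℝ => Real.sin t / t := by
    funext t; rw [slope_def_field]; simp
  rw [this, Real.cos_zero] at h
  exact h

lemma tendsto_phiR_div_sq (hJint : Integrable J) (hJnonneg : ∀ x, 0 ≤ J x)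
    (hmom2 : Integrable (fun x : ℝ => x ^ 2 * J x)) :
    Tendsto (fun ξ : ℝ => phiR J ξ / ξ ^ 2) (nhdsWithin 0 {(0:ℝ)}ᶜ)
      (nhds (2 * π ^ 2 * momentJ J 2)) := by
  have hrw : (fun ξ : ℝ => phiR J ξ / ξ ^ 2)
      = fun ξ : ℝ => ∫ x : ℝ, J x * (1 - Real.cos (2 * π * ξ * x)) / ξ ^ 2 := by
    funext ξ
    unfold phiR
    rw [integral_div]
  have hlimval : (2 : ℝ) * π ^ 2 * momentJ J 2 = ∫ x : ℝ, 2 * π ^ 2 * (x ^ 2 * J x) := by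
    rw [integral_const_mul]; rfl
  rw [hrw, hlimval]
  refine tendsto_integral_filter_of_dominated_convergence
    (fun x : ℝ => 2 * π ^ 2 * (x ^ 2 * J x)) ?_ ?_ (hmom2.const_mul _) ?_
  · filter_upwards with ξ
    exact ((int_F hJint ξ).div_const _).1
  · filter_upwards [eventually_mem_nhdsWithin] with ξ (hξ : ξ ≠ 0)
    filter_upwards with x
    have hnn : (0:ℝ) ≤ J x * (1 - Real.cos (2 * π * ξ * x)) / ξ ^ 2 := by
      apply div_nonneg _ (sq_nonneg ξ)
      exact mul_nonneg (hJnonneg x) (by nlinarith [Real.cos_le_one (2 * π * ξ * x)])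
    rw [Real.norm_eq_abs, abs_of_nonneg hnn]
    rw [div_le_iff₀ (by positivity : (0:ℝ) < ξ ^ 2)]
    have hb := Real.one_sub_sq_div_two_le_cos (x := 2 * π * ξ * x)
    nlinarith [hJnonneg x, mul_le_mul_of_nonneg_left
      (by nlinarith : 1 - Real.cos (2 * π * ξ * x) ≤ 2 * π ^ 2 * ξ ^ 2 * x ^ 2) (hJnonneg x)]
  · filter_upwards with x
    rcases eq_or_ne x 0 with rfl | hx
    · have : (fun ξ : ℝ => J 0 * (1 - Real.cos (2 * π * ξ * 0)) / ξ ^ 2) = fun _ => 0 := by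
        funext ξ; simp
      rw [this]
      simpa using tendsto_const_nhds
    · have hmap : Tendsto (fun ξ : ℝ => π * ξ * x) (nhdsWithin 0 {(0:ℝ)}ᶜ)
          (nhdsWithin 0 {(0:ℝ)}ᶜ) := by
        apply tendsto_nhdsWithin_of_tendsto_nhds_of_eventually_within
        · have : Tendsto (fun ξ : ℝ => π * ξ * x) (nhds 0) (nhds (π * 0 * x)) :=
            (continuous_const.mul continuous_id' |>.mul continuous_const).tendsto 0
          simpa using this.mono_left nhdsWithin_le_nhds
        · filter_upwards [eventually_mem_nhdsWithin] with ξ (hξ : ξ ≠ 0)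
          have : π * ξ * x ≠ 0 := by
            simp only [mul_ne_zero_iff]
            exact ⟨⟨Real.pi_ne_zero, hξ⟩, hx⟩
          exact this
      have hsin2 : Tendsto (fun ξ : ℝ => (Real.sin (π * ξ * x) / (π * ξ * x)) ^ 2)
          (nhdsWithin 0 {(0:ℝ)}ᶜ) (nhds 1) := by
        have := (tendsto_sin_div.comp hmap).pow 2
        simpa using this
      have hfinal := hsin2.const_mul (2 * π ^ 2 * (x ^ 2 * J x))
      rw [mul_one] at hfinal
      refine hfinal.congr' ?_
      filter_upwards [eventually_mem_nhdsWithin] with ξ (hξ : ξ ≠ 0)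
      have hs : Real.sin (π * ξ * x) ^ 2 = 1 / 2 - Real.cos (2 * π * ξ * x) / 2 := by
        rw [Real.sin_sq_eq_half_sub]
        ring_nf
      rw [div_pow, hs]
      field_simp

end PsiAux

namespace PsiAux

lemma psi_eq (hJint : Integrable J) (ξ : ℝ) :
    psiJ J ξ = Real.sign ξ * Real.sqrt (2 * phiR J ξ / (4 * π ^ 2 * momentJ J 2)) := by
  unfold psiJ
  rw [phiJ_eq hJint]

lemma exists_hasDerivAt_pos (hJint : Integrable J) (hJnonneg : ∀ x, 0 ≤ J x)
    (hJne : ¬ (∀ᵐ x : ℝ ∂volume, J x = 0))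
    (hmom2 : Integrable (fun x : ℝ => x ^ 2 * J x)) {ξ0 : ℝ} (hξ0 : 0 < ξ0) :
    ∃ d : ℝ, HasDerivAt (psiJ J) d ξ0 ∧ |d| ≤ 1 := by
  set A : ℝ := 4 * π ^ 2 * momentJ J 2 with hAdef
  have hμ := mu2_pos hJnonneg hJne hmom2
  have hA : 0 < A := by positivity
  have hφpos : 0 < phiR J ξ0 := phiR_pos hJint hJnonneg hJne (ne_of_gt hξ0)
  have hg : HasDerivAt (fun ξ : ℝ => 2 * phiR J ξ / A) (2 * phiD J ξ0 / A) ξ0 :=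
    ((hasDerivAt_phiR hJint hJnonneg hmom2 ξ0).const_mul 2).div_const A
  have hgpos : 0 < 2 * phiR J ξ0 / A := by positivity
  have hsq : HasDerivAt (fun ξ : ℝ => Real.sqrt (2 * phiR J ξ / A))
      (1 / (2 * Real.sqrt (2 * phiR J ξ0 / A)) * (2 * phiD J ξ0 / A)) ξ0 :=
    (Real.hasDerivAt_sqrt (ne_of_gt hgpos)).comp ξ0 hg
  have hev : psiJ J =ᶠ[nhds ξ0] fun ξ : ℝ => Real.sqrt (2 * phiR J ξ / A) := by
    filter_upwards [Ioi_mem_nhds hξ0] with ξ (hξ : 0 < ξ)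
    rw [psi_eq hJint, Real.sign_of_pos hξ, one_mul]
  refine ⟨_, hsq.congr_of_eventuallyEq hev, ?_⟩
  set s : ℝ := Real.sqrt (2 * phiR J ξ0 / A) with hsdef
  have hspos : 0 < s := Real.sqrt_pos.2 hgpos
  have hs2 : s ^ 2 = 2 * phiR J ξ0 / A := Real.sq_sqrt hgpos.le
  have hd : 1 / (2 * s) * (2 * phiD J ξ0 / A) = phiD J ξ0 / (A * s) := by
    field_simp
  rw [hd, abs_div, abs_of_pos (mul_pos hA hspos), div_le_one (mul_pos hA hspos)]
  have hCS := phiD_sq_le hJint hJnonneg hJne hmom2 ξ0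
  have h2A : (A * s) ^ 2 = 8 * π ^ 2 * momentJ J 2 * phiR J ξ0 := by
    rw [mul_pow, hs2, hAdef]
    field_simp
    ring
  nlinarith [abs_nonneg (phiD J ξ0), sq_abs (phiD J ξ0), mul_pos hA hspos]

lemma hasDerivAt_psi_zero (hJint : Integrable J) (hJnonneg : ∀ x, 0 ≤ J x)
    (hJne : ¬ (∀ᵐ x : ℝ ∂volume, J x = 0))
    (hmom2 : Integrable (fun x : ℝ => x ^ 2 * J x)) :
    HasDerivAt (psiJ J) 1 0 := by
  set A : ℝ := 4 * π ^ 2 * momentJ J 2 with hAdef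
  have hμ := mu2_pos hJnonneg hJne hmom2
  have hA : 0 < A := by positivity
  rw [hasDerivAt_iff_tendsto_slope]
  have hlim : Tendsto (fun ξ : ℝ => Real.sqrt (phiR J ξ / ξ ^ 2 * (2 / A)))
      (nhdsWithin 0 {(0:ℝ)}ᶜ) (nhds 1) := by
    have h1 := (tendsto_phiR_div_sq hJint hJnonneg hmom2).mul_const (2 / A)
    have h2 : 2 * π ^ 2 * momentJ J 2 * (2 / A) = 1 := by
      rw [hAdef]; field_simp; ring
    rw [h2] at h1
    have := (Real.continuous_sqrt.tendsto 1).comp h1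
    simpa [Real.sqrt_one, Function.comp_def] using this
  refine hlim.congr' ?_
  filter_upwards [eventually_mem_nhdsWithin] with ξ (hξ : ξ ≠ 0)
  have hφnn : 0 ≤ 2 * phiR J ξ / A := by
    have := phiR_nonneg hJnonneg ξ
    positivity
  have habs : Real.sqrt (phiR J ξ / ξ ^ 2 * (2 / A))
      = Real.sqrt (2 * phiR J ξ / A) / |ξ| := by
    rw [show phiR J ξ / ξ ^ 2 * (2 / A) = (2 * phiR J ξ / A) / ξ ^ 2 by ring,
      Real.sqrt_div hφnn, Real.sqrt_sq_eq_abs]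
  have hψ0 : psiJ J 0 = 0 := by unfold psiJ; simp
  rw [habs, slope_def_field, psi_eq hJint, hψ0, sub_zero, sub_zero]
  set q := Real.sqrt (2 * phiR J ξ / A) with hq
  rcases lt_or_gt_of_ne hξ with h | h
  · rw [Real.sign_of_neg h, abs_of_neg h, neg_one_mul, div_neg, neg_div]
  · rw [Real.sign_of_pos h, abs_of_pos h, one_mul]

end PsiAux

namespace PsiAux

lemma psi_odd (hJint : Integrable J) (ξ : ℝ) : psiJ J (-ξ) = -psiJ J ξ := by
  have hφ : phiR J (-ξ) = phiR J ξ := by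
    unfold phiR
    congr 1
    funext x
    rw [show 2 * π * (-ξ) * x = -(2 * π * ξ * x) by ring, Real.cos_neg]
  rw [psi_eq hJint, psi_eq hJint, hφ, Real.sign_neg]
  ring

lemma exists_hasDerivAt (hJint : Integrable J) (hJnonneg : ∀ x, 0 ≤ J x)
    (hJne : ¬ (∀ᵐ x : ℝ ∂volume, J x = 0))
    (hmom2 : Integrable (fun x : ℝ => x ^ 2 * J x)) (ξ : ℝ) :
    ∃ d : ℝ, HasDerivAt (psiJ J) d ξ ∧ |d| ≤ 1 := by
  rcases lt_trichotomy ξ 0 with h | rfl | h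
  · obtain ⟨d, hd, hb⟩ := exists_hasDerivAt_pos hJint hJnonneg hJne hmom2 (neg_pos.2 h)
    refine ⟨d, ?_, hb⟩
    have h1 : HasDerivAt (fun ξ' : ℝ => psiJ J (-ξ')) (d * (-1)) ξ :=
      hd.comp ξ (hasDerivAt_neg ξ)
    have h2 : HasDerivAt (fun ξ' : ℝ => -psiJ J (-ξ')) (-(d * (-1))) ξ := h1.neg
    have h3 : (fun ξ' : ℝ => -psiJ J (-ξ')) = psiJ J := by
      funext ξ'; rw [psi_odd hJint]; ring
    rw [h3] at h2
    convert h2 using 1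
    ring
  · exact ⟨1, hasDerivAt_psi_zero hJint hJnonneg hJne hmom2, by norm_num⟩
  · exact exists_hasDerivAt_pos hJint hJnonneg hJne hmom2 h

end PsiAux


theorem psiJ_differentiable_deriv_le_one
    (J : ℝ → ℝ) (hJint : Integrable J) (hJnonneg : ∀ x, 0 ≤ J x)
    (hJeven : ∀ x, J (-x) = J x) (hJne : ¬ (∀ᵐ x : ℝ ∂volume, J x = 0))
    (hmom2 : Integrable (fun x : ℝ => x ^ 2 * J x)) :
    Differentiable ℝ (psiJ J) ∧ deriv (psiJ J) 0 = 1 ∧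
      ∀ ξ : ℝ, |deriv (psiJ J) ξ| ≤ 1 := by
  have hall := PsiAux.exists_hasDerivAt hJint hJnonneg hJne hmom2
  refine ⟨fun ξ => ((hall ξ).choose_spec.1).differentiableAt,
    (PsiAux.hasDerivAt_psi_zero hJint hJnonneg hJne hmom2).deriv, fun ξ => ?_⟩
  obtain ⟨d, hd, hb⟩ := hall ξ
  rwa [hd.deriv]
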